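/- For every m ∈ ℕ, the quaternionic Appell polynomial Q_m : ℍ → ℍ is Fueter hyperholomorphic: D Q_m = 0 at every point of ℍ. -/

import Mathlib

open Quaternion

noncomputable section

/-- The quaternion unit `e₁`. -/
def e1 : ℍ[ℝ] := ⟨0, 1, 0, 0⟩

/-- The quaternion unit `e₂`. -/
def e2 : ℍ[ℝ] := ⟨0, 0, 1, 0⟩

/-- The quaternion unit `e₃`. -/
def e3 : ℍ[ℝ] := ⟨0, 0, 0, 1⟩

/-- The coefficients `T^m_j = 2(m-j+1)/((m+1)(m+2))`. -/
def appellT (m j : ℕ) : ℝ :=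
  (2 * ((m : ℝ) - (j : ℝ) + 1)) / (((m : ℝ) + 1) * ((m : ℝ) + 2))

/-- The `m`-th quaternionic Appell polynomial
`Q_m(x) = Σ_{j=0}^m T^m_j x^{m-j} x̄^j`. -/
def appellQ (m : ℕ) (x : ℍ[ℝ]) : ℍ[ℝ] :=
  ∑ j ∈ Finset.range (m + 1), appellT m j • (x ^ (m - j) * (star x) ^ j)

/-- The Cauchy–Fueter operator `Df = ∂f/∂x₀ + e₁ ∂f/∂x₁ + e₂ ∂f/∂x₂ + e₃ ∂f/∂x₃`,
with the directional derivatives taken along `1, e₁, e₂, e₃`. -/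
def fueterD (f : ℍ[ℝ] → ℍ[ℝ]) (x : ℍ[ℝ]) : ℍ[ℝ] :=
  fderiv ℝ f x 1 + e1 * fderiv ℝ f x e1 + e2 * fderiv ℝ f x e2 + e3 * fderiv ℝ f x e3

def mulL (a : ℍ[ℝ]) : ℍ[ℝ] →L[ℝ] ℍ[ℝ] := ContinuousLinearMap.mul ℝ ℍ[ℝ] a
def mulR (a : ℍ[ℝ]) : ℍ[ℝ] →L[ℝ] ℍ[ℝ] := (ContinuousLinearMap.mul ℝ ℍ[ℝ]).flip a

@[simp] lemma mulL_apply (a v : ℍ[ℝ]) : mulL a v = a * v := rfl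
@[simp] lemma mulR_apply (a v : ℍ[ℝ]) : mulR a v = v * a := rfl

/-- derivative of y ↦ y^n -/
def dPow (n : ℕ) (x : ℍ[ℝ]) : ℍ[ℝ] →L[ℝ] ℍ[ℝ] :=
  ∑ i ∈ Finset.range n, (mulL (x ^ i)).comp (mulR (x ^ (n - 1 - i)))

lemma dPow_apply (n : ℕ) (x v : ℍ[ℝ]) :
    dPow n x v = ∑ i ∈ Finset.range n, x ^ i * v * x ^ (n - 1 - i) := by
  simp [dPow, mul_assoc]

lemma hasFDerivAt_pow_quat (n : ℕ) (x : ℍ[ℝ]) :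
    HasFDerivAt (fun y : ℍ[ℝ] => y ^ n) (dPow n x) x := by
  induction n with
  | zero => simpa [dPow] using (hasFDerivAt_const (1 : ℍ[ℝ]) x)
  | succ n ih =>
      have h := ih.mul' (hasFDerivAt_id x)
      have heq : (x ^ n • ContinuousLinearMap.id ℝ ℍ[ℝ] + (dPow n x).smulRight (id x))
          = dPow (n + 1) x := by
        refine ContinuousLinearMap.ext fun v => ?_
        simp only [ContinuousLinearMap.add_apply, ContinuousLinearMap.smul_apply,
          ContinuousLinearMap.smulRight_apply, ContinuousLinearMap.id_apply, id_eq,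
          smul_eq_mul, dPow_apply]
        rw [Finset.sum_range_succ, Finset.sum_mul, add_comm]
        congr 1
        · refine Finset.sum_congr rfl fun i hi => ?_
          have hi' : i < n := Finset.mem_range.mp hi
          have h2 : n + 1 - 1 - i = (n - 1 - i) + 1 := by omega
          rw [h2, pow_succ, ← mul_assoc]
        · simp [Nat.sub_self]
      simp only [pow_succ]
      exact h.congr_fderiv heq

def starLM : ℍ[ℝ] →ₗ[ℝ] ℍ[ℝ] where
  toFun := star
  map_add' := star_add
  map_smul' := fun r a => by ext <;> simp

def starCLM : ℍ[ℝ] →L[ℝ] ℍ[ℝ] := starLM.toContinuousLinearMap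

@[simp] lemma starCLM_apply (v : ℍ[ℝ]) : starCLM v = star v := rfl

def dConjPow (b : ℕ) (x : ℍ[ℝ]) : ℍ[ℝ] →L[ℝ] ℍ[ℝ] := (dPow b (star x)).comp starCLM

lemma hasFDerivAt_conj_pow (b : ℕ) (x : ℍ[ℝ]) :
    HasFDerivAt (fun y : ℍ[ℝ] => star y ^ b) (dConjPow b x) x :=
  (hasFDerivAt_pow_quat b (star x)).comp x (starCLM.hasFDerivAt : HasFDerivAt (fun y : ℍ[ℝ] => star y) starCLM x)

/-- the full derivative of the mixed monomial -/
def dMono (a b : ℕ) (x : ℍ[ℝ]) : ℍ[ℝ] →L[ℝ] ℍ[ℝ] :=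
  x ^ a • dConjPow b x + (dPow a x).smulRight (star x ^ b)

lemma hasFDerivAt_mono (a b : ℕ) (x : ℍ[ℝ]) :
    HasFDerivAt (fun y : ℍ[ℝ] => y ^ a * star y ^ b) (dMono a b x) x :=
  (hasFDerivAt_pow_quat a x).mul' (hasFDerivAt_conj_pow b x)

lemma dMono_apply (a b : ℕ) (x v : ℍ[ℝ]) :
    dMono a b x v = x ^ a * (∑ i ∈ Finset.range b, star x ^ i * star v * star x ^ (b - 1 - i))
      + (∑ i ∈ Finset.range a, x ^ i * v * x ^ (a - 1 - i)) * star x ^ b := by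
  simp [dMono, dConjPow, dPow_apply, smul_eq_mul]


lemma sumA (q : ℍ[ℝ]) :
    1 * q * 1 + e1 * q * e1 + e2 * q * e2 + e3 * q * e3 = (-2 : ℝ) • star q := by
  ext <;> simp [Quaternion.re_mul, Quaternion.imI_mul, Quaternion.imJ_mul,
    Quaternion.imK_mul] <;> simp [e1, e2, e3] <;> ring

lemma sumB (q : ℍ[ℝ]) :
    1 * q * star 1 + e1 * q * star e1 + e2 * q * star e2 + e3 * q * star e3
      = (2 : ℝ) • (q + star q) := by
  ext <;> simp [Quaternion.re_mul, Quaternion.imI_mul, Quaternion.imJ_mul,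
    Quaternion.imK_mul] <;> simp [e1, e2, e3] <;> ring

lemma groupA (p s t : ℍ[ℝ]) :
    p * 1 * s * t + e1 * (p * e1 * s * t) + e2 * (p * e2 * s * t) + e3 * (p * e3 * s * t)
      = (-2 : ℝ) • (star p * s * t) := by
  have h : p * 1 * s * t + e1 * (p * e1 * s * t) + e2 * (p * e2 * s * t) + e3 * (p * e3 * s * t)
      = (1 * p * 1 + e1 * p * e1 + e2 * p * e2 + e3 * p * e3) * (s * t) := by noncomm_ring
  rw [h, sumA, smul_mul_assoc, mul_assoc]

lemma groupB (q p r : ℍ[ℝ]) :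
    q * (p * star 1 * r) + e1 * (q * (p * star e1 * r)) + e2 * (q * (p * star e2 * r))
      + e3 * (q * (p * star e3 * r))
      = (2 : ℝ) • ((q * p + star (q * p)) * r) := by
  have h : q * (p * star 1 * r) + e1 * (q * (p * star e1 * r)) + e2 * (q * (p * star e2 * r))
      + e3 * (q * (p * star e3 * r))
      = (1 * (q * p) * star 1 + e1 * (q * p) * star e1 + e2 * (q * p) * star e2
          + e3 * (q * p) * star e3) * r := by noncomm_ring
  rw [h, sumB, smul_mul_assoc]

lemma fueterD_mono (a b : ℕ) (x : ℍ[ℝ]) :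
    fueterD (fun y => y ^ a * star y ^ b) x
      = ∑ i ∈ Finset.range b,
          (2 : ℝ) • ((x ^ a * star x ^ i + star (x ^ a * star x ^ i)) * star x ^ (b - 1 - i))
        + ∑ i ∈ Finset.range a,
          (-2 : ℝ) • (star (x ^ i) * x ^ (a - 1 - i) * star x ^ b) := by
  have hf := (hasFDerivAt_mono a b x).fderiv
  rw [fueterD, hf]
  simp only [dMono_apply, Finset.mul_sum, Finset.sum_mul, mul_add]
  trans (∑ i ∈ Finset.range b,
      (x ^ a * (star x ^ i * star 1 * star x ^ (b - 1 - i))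
        + e1 * (x ^ a * (star x ^ i * star e1 * star x ^ (b - 1 - i)))
        + e2 * (x ^ a * (star x ^ i * star e2 * star x ^ (b - 1 - i)))
        + e3 * (x ^ a * (star x ^ i * star e3 * star x ^ (b - 1 - i)))))
    + (∑ i ∈ Finset.range a,
      (x ^ i * 1 * x ^ (a - 1 - i) * star x ^ b
        + e1 * (x ^ i * e1 * x ^ (a - 1 - i) * star x ^ b)
        + e2 * (x ^ i * e2 * x ^ (a - 1 - i) * star x ^ b)
        + e3 * (x ^ i * e3 * x ^ (a - 1 - i) * star x ^ b)))
  · simp only [Finset.sum_add_distrib]; abel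
  · congr 1
    · exact Finset.sum_congr rfl fun i _ => groupB _ _ _
    · exact Finset.sum_congr rfl fun i _ => groupA _ _ _

lemma fueterD_sum (n : ℕ) (c : ℕ → ℝ) (f : ℕ → ℍ[ℝ] → ℍ[ℝ]) (f' : ℕ → ℍ[ℝ] →L[ℝ] ℍ[ℝ])
    (x : ℍ[ℝ]) (hf : ∀ j ∈ Finset.range n, HasFDerivAt (f j) (f' j) x) :
    fueterD (fun y => ∑ j ∈ Finset.range n, c j • f j y) x
      = ∑ j ∈ Finset.range n, c j • fueterD (f j) x := by
  have h : HasFDerivAt (fun y => ∑ j ∈ Finset.range n, c j • f j y)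
      (∑ j ∈ Finset.range n, c j • f' j) x :=
    HasFDerivAt.fun_sum fun j hj => (hf j hj).const_smul (c j)
  rw [fueterD, h.fderiv]
  simp only [ContinuousLinearMap.coe_sum', Finset.sum_apply, ContinuousLinearMap.smul_apply,
    Finset.mul_sum, mul_smul_comm, ← Finset.sum_add_distrib]
  refine Finset.sum_congr rfl fun j hj => ?_
  rw [fueterD, (hf j hj).fderiv]
  simp only [smul_add]

section parts
variable (m : ℕ) (x : ℍ[ℝ])

/-- normalized monomial -/
def MM (k : ℕ) : ℍ[ℝ] := x ^ (m - 1 - k) * star x ^ k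

lemma hcomm : ∀ i c : ℕ, star x ^ i * x ^ c = x ^ c * star x ^ i := fun i c =>
  by
  have h : Commute (star x) x := by
    have := star_comm_self' x
    exact this
  exact h.pow_pow i c

lemma normA {j i : ℕ} (hj : j ≤ m) (hi : i < m - j) :
    star (x ^ i) * x ^ (m - j - 1 - i) * star x ^ j = MM m x (j + i) := by
  rw [star_pow, hcomm, MM, mul_assoc, ← pow_add]
  congr 2 <;> omega

lemma normB1 {j i : ℕ} (hj : j ≤ m) (hi : i < j) :
    x ^ (m - j) * star x ^ i * star x ^ (j - 1 - i) = MM m x (j - 1) := by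
  rw [MM, mul_assoc, ← pow_add]
  congr 2 <;> omega

lemma normB2 {j i : ℕ} (hj : j ≤ m) (hi : i < j) :
    star (x ^ (m - j) * star x ^ i) * star x ^ (j - 1 - i) = MM m x (m - 1 - i) := by
  rw [star_mul, star_pow, star_star, star_pow, mul_assoc, ← pow_add, MM]
  congr 2 <;> omega
end parts

section parts2
variable (m : ℕ) (x : ℍ[ℝ])

lemma partA {j : ℕ} (hj : j ≤ m) :
    ∑ i ∈ Finset.range (m - j), (-2 : ℝ) • (star (x ^ i) * x ^ (m - j - 1 - i) * star x ^ j)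
      = ∑ k ∈ Finset.range m, (if j ≤ k then (-2 : ℝ) else 0) • MM m x k := by
  simp only [ite_smul, zero_smul]
  rw [← Finset.sum_filter]
  have hfil : (Finset.range m).filter (fun k => j ≤ k) = Finset.Ico j m := by
    ext k; simp [Finset.mem_Ico]; omega
  rw [hfil, Finset.sum_Ico_eq_sum_range]
  refine Finset.sum_congr rfl fun i hi => ?_
  rw [normA m x hj (Finset.mem_range.1 hi)]

lemma partB1 {j : ℕ} (hj : j ≤ m) :
    ∑ i ∈ Finset.range j, (2 : ℝ) • MM m x (j - 1)
      = ∑ k ∈ Finset.range m, (if k + 1 = j then 2 * (j : ℝ) else 0) • MM m x k := by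
  match j with
  | 0 => simp
  | j' + 1 =>
    rw [Finset.sum_const, Finset.card_range]
    have : ∀ k, ((if k + 1 = j' + 1 then 2 * ((j' : ℝ) + 1) else 0) • MM m x k)
        = (if k = j' then (2 * ((j' : ℝ) + 1)) • MM m x k else 0) := by
      intro k
      by_cases h : k = j' <;> simp [h]
    simp only [Nat.cast_add, Nat.cast_one, this]
    rw [Finset.sum_ite_eq' (Finset.range m) j']
    rw [if_pos (Finset.mem_range.2 (by omega))]
    rw [← Nat.cast_smul_eq_nsmul ℝ, smul_smul]
    norm_num [mul_comm]

lemma partB2 {j : ℕ} (hj : j ≤ m) :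
    ∑ i ∈ Finset.range j, (2 : ℝ) • MM m x (m - 1 - i)
      = ∑ k ∈ Finset.range m, (if m - j ≤ k then (2 : ℝ) else 0) • MM m x k := by
  simp only [ite_smul, zero_smul]
  rw [← Finset.sum_filter]
  have hfil : (Finset.range m).filter (fun k => m - j ≤ k) = Finset.Ico (m - j) m := by
    ext k; simp [Finset.mem_Ico]; omega
  rw [hfil]
  refine Finset.sum_nbij' (fun i => m - 1 - i) (fun k => m - 1 - k) ?_ ?_ ?_ ?_ ?_
  · intro i hi; simp only [Finset.mem_range] at hi; simp [Finset.mem_Ico]; omega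
  · intro k hk; simp only [Finset.mem_Ico] at hk; simp [Finset.mem_range]; omega
  · intro i hi; simp only [Finset.mem_range] at hi; show m - 1 - (m - 1 - i) = i; omega
  · intro k hk; simp only [Finset.mem_Ico] at hk; show m - 1 - (m - 1 - k) = k; omega
  · intro i hi; rfl

end parts2

def gcoef (m j k : ℕ) : ℝ :=
  (if j ≤ k then (-2 : ℝ) else 0) + (if k + 1 = j then 2 * (j : ℝ) else 0)
    + (if m - j ≤ k then (2 : ℝ) else 0)

lemma perJ (m : ℕ) (x : ℍ[ℝ]) {j : ℕ} (hj : j ≤ m) :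
    fueterD (fun y => y ^ (m - j) * star y ^ j) x
      = ∑ k ∈ Finset.range m, gcoef m j k • MM m x k := by
  rw [fueterD_mono (m - j) j x]
  have h1 : ∀ i ∈ Finset.range j,
      (2 : ℝ) • ((x ^ (m - j) * star x ^ i + star (x ^ (m - j) * star x ^ i))
          * star x ^ (j - 1 - i))
        = (2 : ℝ) • MM m x (j - 1) + (2 : ℝ) • MM m x (m - 1 - i) := fun i hi => by
    rw [add_mul, normB1 m x hj (Finset.mem_range.1 hi), normB2 m x hj (Finset.mem_range.1 hi),
      smul_add]
  rw [Finset.sum_congr rfl h1, Finset.sum_add_distrib, partB1 m x hj, partB2 m x hj,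
    partA m x hj, ← Finset.sum_add_distrib, ← Finset.sum_add_distrib]
  refine Finset.sum_congr rfl fun k _ => ?_
  rw [gcoef, add_smul, add_smul]
  abel

def SS (m n : ℕ) : ℝ := ∑ j ∈ Finset.range n, appellT m j

lemma SS_val (m n : ℕ) :
    SS m n = (2 * (n : ℝ) * ((m : ℝ) + 1) - (n : ℝ) * ((n : ℝ) - 1))
      / (((m : ℝ) + 1) * ((m : ℝ) + 2)) := by
  induction n with
  | zero => simp [SS]
  | succ n ih =>
    rw [SS, Finset.sum_range_succ, ← SS, ih, appellT]
    have h1 : ((m : ℝ) + 1) ≠ 0 := by positivity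
    have h2 : ((m : ℝ) + 2) ≠ 0 := by positivity
    push_cast
    field_simp
    ring

lemma coef_zero (m k : ℕ) (hk : k < m) :
    ∑ j ∈ Finset.range (m + 1), appellT m j * gcoef m j k = 0 := by
  simp only [gcoef, mul_add]
  rw [Finset.sum_add_distrib, Finset.sum_add_distrib]
  have e1 : ∑ j ∈ Finset.range (m + 1), appellT m j * (if j ≤ k then (-2 : ℝ) else 0)
      = SS m (k + 1) * (-2) := by
    have hsub : Finset.range (k + 1) ⊆ Finset.range (m + 1) := Finset.range_subset_range.2 (by omega)
    have hvan : ∀ j ∈ Finset.range (m + 1), j ∉ Finset.range (k + 1) →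
        appellT m j * (if j ≤ k then (-2 : ℝ) else 0) = 0 := by
      intro j hj hj2
      simp only [Finset.mem_range] at hj hj2
      rw [if_neg (by omega), mul_zero]
    rw [← Finset.sum_subset hsub hvan, SS, Finset.sum_mul]
    refine Finset.sum_congr rfl fun j hj => ?_
    simp only [Finset.mem_range] at hj
    rw [if_pos (by omega)]
  have e2 : ∑ j ∈ Finset.range (m + 1), appellT m j * (if k + 1 = j then 2 * (j : ℝ) else 0)
      = appellT m (k + 1) * (2 * ((k : ℝ) + 1)) := by
    rw [Finset.sum_eq_single (k + 1)]
    · rw [if_pos rfl]; push_cast; ring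
    · intro j hj hne; rw [if_neg (fun h => hne h.symm), mul_zero]
    · intro h; exact absurd (Finset.mem_range.2 (by omega)) h
  have e3 : ∑ j ∈ Finset.range (m + 1), appellT m j * (if m - j ≤ k then (2 : ℝ) else 0)
      = (SS m (m + 1) - SS m (m - k)) * 2 := by
    have hcong : ∀ j ∈ Finset.range (m + 1),
        appellT m j * (if m - j ≤ k then (2 : ℝ) else 0)
          = if m - k ≤ j then appellT m j * 2 else 0 := by
      intro j hj
      by_cases h : m - k ≤ j
      · rw [if_pos h, if_pos (by omega)]
      · rw [if_neg h, if_neg (by omega), mul_zero]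
    rw [Finset.sum_congr rfl hcong, ← Finset.sum_filter]
    have hfil : (Finset.range (m + 1)).filter (fun j => m - k ≤ j) = Finset.Ico (m - k) (m + 1) := by
      ext j; simp [Finset.mem_Ico]; omega
    rw [hfil, Finset.sum_Ico_eq_sub _ (by omega : m - k ≤ m + 1), SS, SS, sub_mul,
      Finset.sum_mul, Finset.sum_mul]
  rw [e1, e2, e3, SS_val, SS_val, SS_val, appellT]
  have h1 : ((m : ℝ) + 1) ≠ 0 := by positivity
  have h2 : ((m : ℝ) + 2) ≠ 0 := by positivity
  have hmk : ((m - k : ℕ) : ℝ) = (m : ℝ) - (k : ℝ) := by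
    rw [Nat.cast_sub hk.le]
  rw [hmk]
  push_cast
  field_simp
  ring


/-- Every quaternionic Appell polynomial `Q_m` is Fueter hyperholomorphic:
`D Q_m = 0` at every point of `ℍ`. -/
theorem appellQ_fueter_hyperholomorphic (m : ℕ) (x : ℍ[ℝ]) :
    fueterD (appellQ m) x = 0 := by
  have hQ : appellQ m = fun y => ∑ j ∈ Finset.range (m + 1),
      appellT m j • ((fun j y => y ^ (m - j) * star y ^ j) j y) := rfl
  rw [hQ, fueterD_sum (m + 1) (appellT m) _ (fun j => dMono (m - j) j x) x
    (fun j _ => hasFDerivAt_mono (m - j) j x)]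
  have : ∀ j ∈ Finset.range (m + 1),
      appellT m j • fueterD (fun y => y ^ (m - j) * star y ^ j) x
        = ∑ k ∈ Finset.range m, (appellT m j * gcoef m j k) • MM m x k := by
    intro j hj
    have hj' : j ≤ m := by have := Finset.mem_range.1 hj; omega
    rw [perJ m x hj', Finset.smul_sum]
    exact Finset.sum_congr rfl fun k _ => by rw [smul_smul]
  rw [Finset.sum_congr rfl this, Finset.sum_comm]
  refine Finset.sum_eq_zero fun k hk => ?_
  rw [← Finset.sum_smul, coef_zero m k (Finset.mem_range.1 hk), zero_smul]
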